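/- Suppose P ∈ 𝒫₂(ℝ^d) and the law of ε and the reference law P^U are absolutely continuous with finite second moments, Y = b*X + ε with X independent of ε, E X X^⊤ = Σ positive definite, and P^X is not a point mass. If φ is the optimal transport map from P^U to P^ε, then the coupling of (U, Y − bX) induced by transporting U to ε via φ and independently adding (b* − b)X has squared transport cost W₂²(P^U, P^ε) + E‖(b* − b)X‖², and consequently ℒ(b; U) − ℒ(b*; U) ≥ 0 for all b ∈ ℝ^{d×p}, where ℒ(b; U) := ⟨⟨P^{Y−bX}, P^U⟩⟩. -/

import Mathlib

open MeasureTheory ProbabilityTheory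

noncomputable section

/-- `γ` is a coupling of `P` and `Q`. -/
def IsCoupling {α β : Type*} [MeasurableSpace α] [MeasurableSpace β]
    (γ : Measure (α × β)) (P : Measure α) (Q : Measure β) : Prop :=
  γ.map Prod.fst = P ∧ γ.map Prod.snd = Q

section Helpers

variable {α β : Type*} [MeasurableSpace α] [MeasurableSpace β]
  {P : Measure α} {Q : Measure β} {γ : Measure (α × β)}

lemma IsCoupling.isProb [IsProbabilityMeasure P] (h : IsCoupling γ P Q) :
    IsProbabilityMeasure γ := by
  constructor
  have h1 : γ Set.univ = P Set.univ := by
    rw [← h.1, Measure.map_apply measurable_fst MeasurableSet.univ, Set.preimage_univ]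
  rw [h1, measure_univ]

lemma isCoupling_prod [IsProbabilityMeasure P] [IsProbabilityMeasure Q] :
    IsCoupling (P.prod Q) P Q := by
  constructor <;> simp

lemma IsCoupling.integrable_fst {g : α → ℝ} (h : IsCoupling γ P Q)
    (hg : AEStronglyMeasurable g P) (hgi : Integrable g P) :
    Integrable (fun z : α × β => g z.1) γ :=
  (integrable_map_measure (h.1.symm ▸ hg) measurable_fst.aemeasurable).mp (h.1.symm ▸ hgi)

lemma IsCoupling.integrable_snd {g : β → ℝ} (h : IsCoupling γ P Q)
    (hg : AEStronglyMeasurable g Q) (hgi : Integrable g Q) :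
    Integrable (fun z : α × β => g z.2) γ :=
  (integrable_map_measure (h.2.symm ▸ hg) measurable_snd.aemeasurable).mp (h.2.symm ▸ hgi)

lemma IsCoupling.integral_fst {g : α → ℝ} (h : IsCoupling γ P Q)
    (hg : AEStronglyMeasurable g P) :
    ∫ z, g z.1 ∂γ = ∫ x, g x ∂P := by
  rw [← h.1] at hg ⊢
  exact (integral_map measurable_fst.aemeasurable hg).symm

lemma IsCoupling.integral_snd {g : β → ℝ} (h : IsCoupling γ P Q)
    (hg : AEStronglyMeasurable g Q) :
    ∫ z, g z.2 ∂γ = ∫ x, g x ∂Q := by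
  rw [← h.2] at hg ⊢
  exact (integral_map measurable_snd.aemeasurable hg).symm

end Helpers

section HelpersE

variable {d : ℕ}
local notation "E" => EuclideanSpace ℝ (Fin d)

lemma coupling_inner_integrable {P Q : Measure E} {γ : Measure (E × E)}
    (h : IsCoupling γ P Q)
    (hP2 : Integrable (fun x => ‖x‖ ^ 2) P) (hQ2 : Integrable (fun y => ‖y‖ ^ 2) Q) :
    Integrable (fun z : E × E => (inner ℝ z.1 z.2 : ℝ)) γ := by
  have h1 : Integrable (fun z : E × E => ‖z.1‖ ^ 2) γ :=
    h.integrable_fst ((measurable_norm.pow_const 2).aestronglyMeasurable) hP2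
  have h2 : Integrable (fun z : E × E => ‖z.2‖ ^ 2) γ :=
    h.integrable_snd ((measurable_norm.pow_const 2).aestronglyMeasurable) hQ2
  refine (((h1.add h2).div_const 2)).mono'
    ((measurable_fst.inner measurable_snd).aestronglyMeasurable) ?_
  filter_upwards with z
  have h3 := abs_real_inner_le_norm z.1 z.2
  rw [Real.norm_eq_abs]
  simp only [Pi.add_apply]
  nlinarith [sq_nonneg (‖z.1‖ - ‖z.2‖), abs_nonneg (inner ℝ z.1 z.2 : ℝ)]

lemma coupling_inner_le {P Q : Measure E} {γ : Measure (E × E)}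
    (h : IsCoupling γ P Q)
    (hP2 : Integrable (fun x => ‖x‖ ^ 2) P) (hQ2 : Integrable (fun y => ‖y‖ ^ 2) Q) :
    ∫ z, (inner ℝ z.1 z.2 : ℝ) ∂γ ≤ (∫ x, ‖x‖ ^ 2 ∂P + ∫ y, ‖y‖ ^ 2 ∂Q) / 2 := by
  have h1 : Integrable (fun z : E × E => ‖z.1‖ ^ 2) γ :=
    h.integrable_fst ((measurable_norm.pow_const 2).aestronglyMeasurable) hP2
  have h2 : Integrable (fun z : E × E => ‖z.2‖ ^ 2) γ :=
    h.integrable_snd ((measurable_norm.pow_const 2).aestronglyMeasurable) hQ2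
  have hle : ∫ z, (inner ℝ z.1 z.2 : ℝ) ∂γ ≤ ∫ z, (‖z.1‖ ^ 2 + ‖z.2‖ ^ 2) / 2 ∂γ := by
    refine integral_mono (coupling_inner_integrable h hP2 hQ2) ((h1.add h2).div_const 2) ?_
    intro z
    have h3 := abs_real_inner_le_norm z.1 z.2
    nlinarith [sq_nonneg (‖z.1‖ - ‖z.2‖), abs_nonneg (inner ℝ z.1 z.2 : ℝ),
      le_abs_self (inner ℝ z.1 z.2 : ℝ)]
  calc ∫ z, (inner ℝ z.1 z.2 : ℝ) ∂γ ≤ ∫ z, (‖z.1‖ ^ 2 + ‖z.2‖ ^ 2) / 2 ∂γ := hle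
    _ = (∫ x, ‖x‖ ^ 2 ∂P + ∫ y, ‖y‖ ^ 2 ∂Q) / 2 := by
        rw [integral_div, integral_add h1 h2,
          h.integral_fst ((measurable_norm.pow_const 2).aestronglyMeasurable),
          h.integral_snd ((measurable_norm.pow_const 2).aestronglyMeasurable)]

end HelpersE

/-- The Wasserstein product `⟨⟨P,Q⟩⟩`. -/
def wip {d : ℕ} (P Q : Measure (EuclideanSpace ℝ (Fin d))) : ℝ :=
  sSup {r | ∃ γ : Measure (EuclideanSpace ℝ (Fin d) × EuclideanSpace ℝ (Fin d)),
    IsCoupling γ P Q ∧ r = ∫ z, (inner ℝ z.1 z.2 : ℝ) ∂γ}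

/-- The squared 2-Wasserstein distance. -/
def W2sq {d : ℕ} (P Q : Measure (EuclideanSpace ℝ (Fin d))) : ℝ :=
  sInf {r | ∃ γ : Measure (EuclideanSpace ℝ (Fin d) × EuclideanSpace ℝ (Fin d)),
    IsCoupling γ P Q ∧ r = ∫ z, ‖z.1 - z.2‖ ^ 2 ∂γ}

set_option maxHeartbeats 1000000 in
/-- In the linear model `Y = b*X + ε`, transporting `U` to `ε` via the optimal map `φ`
and independently adding `(b* − b)X` yields a coupling of `(U, Y − bX)` with squared
cost `W₂²(P^U, P^ε) + E‖(b* − b)X‖²`; consequently `ℒ(b;U) − ℒ(b*;U) ≥ 0`, where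
`ℒ(b;U) = ⟨⟨P^{Y−bX}, P^U⟩⟩`. -/
theorem stmt_15 {d p : ℕ} {Ω : Type*} [MeasurableSpace Ω] (μ : Measure Ω)
    [IsProbabilityMeasure μ]
    (X : Ω → EuclideanSpace ℝ (Fin p)) (ε : Ω → EuclideanSpace ℝ (Fin d))
    (hXm : Measurable X) (hεm : Measurable ε) (hindep : IndepFun X ε μ)
    (hX0 : ∫ ω, X ω ∂μ = 0)
    (hX2 : Integrable (fun ω => ‖X ω‖ ^ 2) μ) (hε2 : Integrable (fun ω => ‖ε ω‖ ^ 2) μ)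
    (hεac : μ.map ε ≪ volume)
    (Sig : Matrix (Fin p) (Fin p) ℝ) (hSigPD : Sig.PosDef)
    (hSigEq : ∀ i j, Sig i j = ∫ ω, X ω i * X ω j ∂μ)
    (hnotpm : ∀ c, μ.map X ≠ Measure.dirac c)
    (PU : Measure (EuclideanSpace ℝ (Fin d))) [IsProbabilityMeasure PU]
    (hUac : PU ≪ volume) (hU2 : Integrable (fun y => ‖y‖ ^ 2) PU)
    (bstar b : EuclideanSpace ℝ (Fin p) →L[ℝ] EuclideanSpace ℝ (Fin d))
    (φ : EuclideanSpace ℝ (Fin d) → EuclideanSpace ℝ (Fin d)) (hφm : Measurable φ)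
    (hφpush : PU.map φ = μ.map ε)
    (hφopt : ∫ u, ‖φ u - u‖ ^ 2 ∂PU = W2sq PU (μ.map ε)) :
    (∫ q, ‖q.1 - q.2‖ ^ 2
        ∂((PU.prod (μ.map fun ω => (bstar - b) (X ω))).map fun z => (z.1, φ z.1 + z.2))
      = W2sq PU (μ.map ε) + ∫ ω, ‖(bstar - b) (X ω)‖ ^ 2 ∂μ) ∧
    0 ≤ wip (μ.map fun ω => (bstar (X ω) + ε ω) - b (X ω)) PU - wip (μ.map ε) PU := by
  set L : EuclideanSpace ℝ (Fin p) →L[ℝ] EuclideanSpace ℝ (Fin d) := bstar - b with hLdef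
  have hLXm : Measurable fun ω => L (X ω) := L.continuous.measurable.comp hXm
  set ν : Measure (EuclideanSpace ℝ (Fin d)) := μ.map fun ω => L (X ω) with hνdef
  haveI : IsProbabilityMeasure ν := Measure.isProbabilityMeasure_map hLXm.aemeasurable
  haveI : IsProbabilityMeasure (μ.map ε) := Measure.isProbabilityMeasure_map hεm.aemeasurable
  have hXint : Integrable X μ :=
    ((memLp_two_iff_integrable_sq_norm hXm.aestronglyMeasurable).mpr hX2).integrable one_le_two
  have hLX2 : Integrable (fun ω => ‖L (X ω)‖ ^ 2) μ := by
    refine (hX2.const_mul (‖L‖ ^ 2)).mono' ((hLXm.norm.pow_const 2).aestronglyMeasurable) ?_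
    filter_upwards with ω
    rw [Real.norm_eq_abs, abs_of_nonneg (by positivity)]
    calc ‖L (X ω)‖ ^ 2 ≤ (‖L‖ * ‖X ω‖) ^ 2 := by
          gcongr; exact L.le_opNorm _
      _ = ‖L‖ ^ 2 * ‖X ω‖ ^ 2 := by ring
  have hLXint : Integrable (fun ω => L (X ω)) μ := L.integrable_comp hXint
  have hν1 : Integrable (fun w : EuclideanSpace ℝ (Fin d) => w) ν :=
    (integrable_map_measure aestronglyMeasurable_id hLXm.aemeasurable).mpr hLXint
  have hν2 : Integrable (fun w : EuclideanSpace ℝ (Fin d) => ‖w‖ ^ 2) ν :=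
    (integrable_map_measure ((measurable_norm.pow_const 2).aestronglyMeasurable)
      hLXm.aemeasurable).mpr hLX2
  have hνmean : ∫ w, w ∂ν = 0 := by
    have h1 : ∫ w, w ∂ν = ∫ ω, L (X ω) ∂μ :=
      integral_map (f := fun w => w) hLXm.aemeasurable aestronglyMeasurable_id
    rw [h1, L.integral_comp_comm hXint, hX0, map_zero]
  have hνsq : ∫ w, ‖w‖ ^ 2 ∂ν = ∫ ω, ‖L (X ω)‖ ^ 2 ∂μ :=
    integral_map (f := fun w => ‖w‖ ^ 2) hLXm.aemeasurable
      ((measurable_norm.pow_const 2).aestronglyMeasurable)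
  have hεmap2 : Integrable (fun x : EuclideanSpace ℝ (Fin d) => ‖x‖ ^ 2) (μ.map ε) :=
    (integrable_map_measure ((measurable_norm.pow_const 2).aestronglyMeasurable)
      hεm.aemeasurable).mpr hε2
  have hφsq : Integrable (fun u : EuclideanSpace ℝ (Fin d) => ‖φ u‖ ^ 2) PU := by
    have h1 : Integrable (fun x : EuclideanSpace ℝ (Fin d) => ‖x‖ ^ 2) (PU.map φ) :=
      hφpush ▸ hεmap2
    exact (integrable_map_measure ((measurable_norm.pow_const 2).aestronglyMeasurable)
      hφm.aemeasurable).mp h1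
  have hsubm : Measurable fun u : EuclideanSpace ℝ (Fin d) => u - φ u := measurable_id.sub hφm
  have hf2PU : Integrable (fun u : EuclideanSpace ℝ (Fin d) => ‖u - φ u‖ ^ 2) PU := by
    refine ((hU2.const_mul 2).add (hφsq.const_mul 2)).mono'
      ((hsubm.norm.pow_const 2).aestronglyMeasurable) ?_
    filter_upwards with u
    simp only [Pi.add_apply]
    rw [Real.norm_eq_abs, abs_of_nonneg (by positivity)]
    have h1 : ‖u - φ u‖ ≤ ‖u‖ + ‖φ u‖ := norm_sub_le _ _
    have h2 : ‖u - φ u‖ ^ 2 ≤ (‖u‖ + ‖φ u‖) ^ 2 := pow_le_pow_left₀ (norm_nonneg _) h1 2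
    nlinarith [sq_nonneg (‖u‖ - ‖φ u‖)]
  have hf1PU : Integrable (fun u : EuclideanSpace ℝ (Fin d) => ‖u - φ u‖) PU :=
    (((memLp_two_iff_integrable_sq_norm hsubm.aestronglyMeasurable).mpr
      hf2PU).integrable one_le_two).norm
  constructor
  · -- Part 1: the cost identity
    have hg : Measurable fun z : EuclideanSpace ℝ (Fin d) × EuclideanSpace ℝ (Fin d) =>
        (z.1, φ z.1 + z.2) :=
      measurable_fst.prodMk ((hφm.comp measurable_fst).add measurable_snd)
    have hmap : ∫ q, ‖q.1 - q.2‖ ^ 2 ∂((PU.prod ν).map fun z => (z.1, φ z.1 + z.2))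
        = ∫ z, ‖z.1 - (φ z.1 + z.2)‖ ^ 2 ∂(PU.prod ν) :=
      integral_map hg.aemeasurable
        (((measurable_fst.sub measurable_snd).norm.pow_const 2).aestronglyMeasurable)
    rw [hmap]
    have hexp : ∀ z : EuclideanSpace ℝ (Fin d) × EuclideanSpace ℝ (Fin d),
        ‖z.1 - (φ z.1 + z.2)‖ ^ 2
        = ‖z.1 - φ z.1‖ ^ 2 - 2 * (inner ℝ (z.1 - φ z.1) z.2 : ℝ) + ‖z.2‖ ^ 2 := by
      intro z
      rw [show z.1 - (φ z.1 + z.2) = (z.1 - φ z.1) - z.2 by abel]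
      exact norm_sub_sq_real _ _
    simp only [hexp]
    have hA : Integrable
        (fun z : EuclideanSpace ℝ (Fin d) × EuclideanSpace ℝ (Fin d) => ‖z.1 - φ z.1‖ ^ 2)
        (PU.prod ν) :=
      isCoupling_prod.integrable_fst ((hsubm.norm.pow_const 2).aestronglyMeasurable) hf2PU
    have hC : Integrable
        (fun z : EuclideanSpace ℝ (Fin d) × EuclideanSpace ℝ (Fin d) => ‖z.2‖ ^ 2)
        (PU.prod ν) :=
      isCoupling_prod.integrable_snd ((measurable_norm.pow_const 2).aestronglyMeasurable) hν2
    have hB : Integrable (fun z : EuclideanSpace ℝ (Fin d) × EuclideanSpace ℝ (Fin d) =>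
        (inner ℝ (z.1 - φ z.1) z.2 : ℝ)) (PU.prod ν) := by
      refine (hf1PU.mul_prod hν1.norm).mono'
        (((hsubm.comp measurable_fst).inner measurable_snd).aestronglyMeasurable) ?_
      filter_upwards with z
      rw [Real.norm_eq_abs]
      exact abs_real_inner_le_norm _ _
    have hBzero : ∫ z : EuclideanSpace ℝ (Fin d) × EuclideanSpace ℝ (Fin d),
        (inner ℝ (z.1 - φ z.1) z.2 : ℝ) ∂(PU.prod ν) = 0 := by
      rw [integral_prod _ hB]
      have h1 : ∀ u : EuclideanSpace ℝ (Fin d), ∫ w, (inner ℝ (u - φ u) w : ℝ) ∂ν = 0 := fun u => by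
        rw [integral_inner hν1, hνmean, inner_zero_right]
      simp only [h1, integral_zero]
    have hB2 : Integrable (fun z : EuclideanSpace ℝ (Fin d) × EuclideanSpace ℝ (Fin d) =>
        2 * (inner ℝ (z.1 - φ z.1) z.2 : ℝ)) (PU.prod ν) := hB.const_mul 2
    have hAB : Integrable (fun z : EuclideanSpace ℝ (Fin d) × EuclideanSpace ℝ (Fin d) =>
        ‖z.1 - φ z.1‖ ^ 2 - 2 * (inner ℝ (z.1 - φ z.1) z.2 : ℝ)) (PU.prod ν) := hA.sub hB2
    rw [integral_add hAB hC, integral_sub hA hB2,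
      integral_const_mul, hBzero,
      isCoupling_prod.integral_fst ((hsubm.norm.pow_const 2).aestronglyMeasurable),
      isCoupling_prod.integral_snd ((measurable_norm.pow_const 2).aestronglyMeasurable),
      hνsq]
    have h2 : ∫ u, ‖u - φ u‖ ^ 2 ∂PU = W2sq PU (μ.map ε) := by
      rw [← hφopt]
      congr 1
      funext u
      rw [norm_sub_rev]
    rw [h2]
    ring
  · -- Part 2
    rw [sub_nonneg]
    set Yf : Ω → EuclideanSpace ℝ (Fin d) := fun ω => (bstar (X ω) + ε ω) - b (X ω) with hYdef
    have hYeq : Yf = fun ω => ε ω + L (X ω) := by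
      funext ω
      simp only [hYdef, hLdef, ContinuousLinearMap.sub_apply]
      abel
    have hYm : Measurable Yf := by rw [hYeq]; exact hεm.add hLXm
    haveI : IsProbabilityMeasure (μ.map Yf) := Measure.isProbabilityMeasure_map hYm.aemeasurable
    have hY2 : Integrable (fun ω => ‖Yf ω‖ ^ 2) μ := by
      refine ((hε2.const_mul 2).add (hLX2.const_mul 2)).mono'
        ((hYm.norm.pow_const 2).aestronglyMeasurable) ?_
      filter_upwards with ω
      simp only [Pi.add_apply]
      rw [Real.norm_eq_abs, abs_of_nonneg (by positivity)]
      have h1 : ‖Yf ω‖ ≤ ‖ε ω‖ + ‖L (X ω)‖ := by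
        rw [hYeq]; exact norm_add_le _ _
      have h2 : ‖Yf ω‖ ^ 2 ≤ (‖ε ω‖ + ‖L (X ω)‖) ^ 2 := pow_le_pow_left₀ (norm_nonneg _) h1 2
      nlinarith [sq_nonneg (‖ε ω‖ - ‖L (X ω)‖)]
    have hYmap2 : Integrable (fun x : EuclideanSpace ℝ (Fin d) => ‖x‖ ^ 2) (μ.map Yf) :=
      (integrable_map_measure ((measurable_norm.pow_const 2).aestronglyMeasurable)
        hYm.aemeasurable).mpr hY2
    have hjoint : μ.map (fun ω => (ε ω, L (X ω))) = (μ.map ε).prod ν :=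
      (indepFun_iff_map_prod_eq_prod_map_map hεm.aemeasurable hLXm.aemeasurable).mp
        (hindep.symm.comp measurable_id L.continuous.measurable)
    have hYlaw : μ.map Yf = ((μ.map ε).prod ν).map
        (fun pr : EuclideanSpace ℝ (Fin d) × EuclideanSpace ℝ (Fin d) => pr.1 + pr.2) := by
      rw [← hjoint, Measure.map_map (g := fun pr : EuclideanSpace ℝ (Fin d) × EuclideanSpace ℝ (Fin d) => pr.1 + pr.2) (measurable_fst.add measurable_snd) (hεm.prodMk hLXm)]
      congr 1
    unfold wip
    refine csSup_le_csSup ?_ ?_ ?_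
    · refine ⟨(∫ x, ‖x‖ ^ 2 ∂(μ.map Yf) + ∫ y, ‖y‖ ^ 2 ∂PU) / 2, ?_⟩
      rintro r ⟨γ, hγ, rfl⟩
      exact coupling_inner_le hγ hYmap2 hU2
    · exact ⟨_, (μ.map ε).prod PU, isCoupling_prod, rfl⟩
    · rintro r ⟨γ, hγ, rfl⟩
      haveI : IsProbabilityMeasure γ := hγ.isProb
      set G : (EuclideanSpace ℝ (Fin d) × EuclideanSpace ℝ (Fin d)) × EuclideanSpace ℝ (Fin d) →
          EuclideanSpace ℝ (Fin d) × EuclideanSpace ℝ (Fin d) :=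
        fun zw => (zw.1.1 + zw.2, zw.1.2) with hGdef
      have hGm : Measurable G :=
        ((measurable_fst.comp measurable_fst).add measurable_snd).prodMk
          (measurable_snd.comp measurable_fst)
      refine ⟨(γ.prod ν).map G, ⟨?_, ?_⟩, ?_⟩
      · rw [Measure.map_map measurable_fst hGm]
        have h1 : (Prod.fst ∘ G)
            = (fun pr : EuclideanSpace ℝ (Fin d) × EuclideanSpace ℝ (Fin d) => pr.1 + pr.2)
              ∘ Prod.map Prod.fst id := rfl
        rw [h1, ← Measure.map_map (g := fun pr : EuclideanSpace ℝ (Fin d) × EuclideanSpace ℝ (Fin d) => pr.1 + pr.2) (measurable_fst.add measurable_snd)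
          (measurable_fst.prodMap measurable_id),
          ← Measure.map_prod_map _ _ measurable_fst measurable_id, hγ.1, Measure.map_id, hYlaw]
      · rw [Measure.map_map measurable_snd hGm]
        have h1 : (Prod.snd ∘ G) = Prod.snd ∘ (Prod.fst :
            (EuclideanSpace ℝ (Fin d) × EuclideanSpace ℝ (Fin d)) × EuclideanSpace ℝ (Fin d) →
            EuclideanSpace ℝ (Fin d) × EuclideanSpace ℝ (Fin d)) := rfl
        rw [h1, ← Measure.map_map measurable_snd measurable_fst]
        have h2 : (γ.prod ν).map Prod.fst = γ := by simp
        rw [h2, hγ.2]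
      · have hIγ : Integrable (fun z : EuclideanSpace ℝ (Fin d) × EuclideanSpace ℝ (Fin d) =>
            (inner ℝ z.1 z.2 : ℝ)) γ :=
          coupling_inner_integrable hγ hεmap2 hU2
        have hf1 : Integrable
            (fun zw : (EuclideanSpace ℝ (Fin d) × EuclideanSpace ℝ (Fin d)) ×
              EuclideanSpace ℝ (Fin d) => (inner ℝ zw.1.1 zw.1.2 : ℝ)) (γ.prod ν) :=
          isCoupling_prod.integrable_fst
            ((measurable_fst.inner measurable_snd).aestronglyMeasurable) hIγ
        have hPU1 : Integrable (fun y : EuclideanSpace ℝ (Fin d) => ‖y‖) PU := by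
          have h1 : Integrable (fun y : EuclideanSpace ℝ (Fin d) => ‖(id y :
              EuclideanSpace ℝ (Fin d))‖ ^ 2) PU := hU2
          exact (((memLp_two_iff_integrable_sq_norm aestronglyMeasurable_id).mpr
            h1).integrable one_le_two).norm
        have hγn : Integrable
            (fun z : EuclideanSpace ℝ (Fin d) × EuclideanSpace ℝ (Fin d) => ‖z.2‖) γ :=
          hγ.integrable_snd measurable_norm.aestronglyMeasurable hPU1
        have hf2 : Integrable
            (fun zw : (EuclideanSpace ℝ (Fin d) × EuclideanSpace ℝ (Fin d)) ×
              EuclideanSpace ℝ (Fin d) => (inner ℝ zw.2 zw.1.2 : ℝ)) (γ.prod ν) := by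
          refine (hγn.mul_prod hν1.norm).mono'
            ((measurable_snd.inner (measurable_snd.comp measurable_fst)).aestronglyMeasurable) ?_
          filter_upwards with zw
          rw [Real.norm_eq_abs]
          calc |(inner ℝ zw.2 zw.1.2 : ℝ)| ≤ ‖zw.2‖ * ‖zw.1.2‖ := abs_real_inner_le_norm _ _
            _ = ‖zw.1.2‖ * ‖zw.2‖ := mul_comm _ _
        have key : ∫ q, (inner ℝ q.1 q.2 : ℝ) ∂((γ.prod ν).map G)
            = ∫ z, (inner ℝ z.1 z.2 : ℝ) ∂γ := by
          have hmap2 : ∫ q, (inner ℝ q.1 q.2 : ℝ) ∂((γ.prod ν).map G)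
              = ∫ zw : (EuclideanSpace ℝ (Fin d) × EuclideanSpace ℝ (Fin d)) ×
                  EuclideanSpace ℝ (Fin d),
                (inner ℝ (zw.1.1 + zw.2) zw.1.2 : ℝ) ∂(γ.prod ν) :=
            integral_map hGm.aemeasurable
              ((measurable_fst.inner measurable_snd).aestronglyMeasurable)
          rw [hmap2]
          have hexp : ∀ zw : (EuclideanSpace ℝ (Fin d) × EuclideanSpace ℝ (Fin d)) ×
              EuclideanSpace ℝ (Fin d), (inner ℝ (zw.1.1 + zw.2) zw.1.2 : ℝ)
              = (inner ℝ zw.1.1 zw.1.2 : ℝ) + (inner ℝ zw.2 zw.1.2 : ℝ) := fun zw =>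
            inner_add_left _ _ _
          simp only [hexp]
          rw [integral_add hf1 hf2]
          have hzero : ∫ zw : (EuclideanSpace ℝ (Fin d) × EuclideanSpace ℝ (Fin d)) ×
              EuclideanSpace ℝ (Fin d), (inner ℝ zw.2 zw.1.2 : ℝ) ∂(γ.prod ν) = 0 := by
            rw [integral_prod _ hf2]
            have h1 : ∀ z : EuclideanSpace ℝ (Fin d) × EuclideanSpace ℝ (Fin d),
                ∫ w, (inner ℝ w z.2 : ℝ) ∂ν = 0 := fun z => by
              have h2 : (fun w : EuclideanSpace ℝ (Fin d) => (inner ℝ w z.2 : ℝ))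
                  = fun w => (inner ℝ z.2 w : ℝ) := by
                funext w; exact real_inner_comm _ _
              rw [h2, integral_inner hν1, hνmean, inner_zero_right]
            simp only [h1, integral_zero]
          rw [hzero, add_zero,
            isCoupling_prod.integral_fst
              ((measurable_fst.inner measurable_snd).aestronglyMeasurable)]
        exact key.symm
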